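/- Let f : ℝ₊ × X → X be a continuous semiflow on a Polish space X and x ∈ X with precompact orbit. If x ∈ C_x, then the set {y ∈ C_x : y ∈ C_y and C_y = C_x} is residual in the subspace C_x. -/

import Mathlib

open MeasureTheory Filter Metric Set Topology
open scoped Classical

noncomputable section

/-- The set `S ⊆ ℝ` has density `α` in `[0,∞)`. -/
def HasDens (S : Set ℝ) (α : ℝ) : Prop :=
  Filter.Tendsto (fun T : ℝ => (MeasureTheory.volume (S ∩ Set.Icc 0 T)).toReal / T)
    Filter.atTop (nhds α)

/-- `f` is a continuous semiflow on `X` (time in `[0,∞)`). -/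
def IsSemiflow {X : Type*} [MetricSpace X] (f : ℝ → X → X) : Prop :=
  ContinuousOn (fun p : ℝ × X => f p.1 p.2) (Set.Ici 0 ×ˢ Set.univ) ∧
  (∀ x : X, f 0 x = x) ∧
  (∀ s t : ℝ, 0 ≤ s → 0 ≤ t → ∀ x : X, f s (f t x) = f (s + t) x)

/-- `C` is a center of attraction of the motion `f (t, x)`. -/
def IsCtr {X : Type*} [MetricSpace X] (f : ℝ → X → X) (x : X) (C : Set X) : Prop :=
  IsClosed C ∧ ∀ ε > (0 : ℝ), HasDens {t : ℝ | 0 ≤ t ∧ f t x ∈ Metric.thickening ε C} 1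

/-- `C` is the minimal center of attraction of the motion `f (t, x)`. -/
def IsMCA {X : Type*} [MetricSpace X] (f : ℝ → X → X) (x : X) (C : Set X) : Prop :=
  IsCtr f x C ∧ ∀ C' ⊆ C, IsCtr f x C' → C' = C

namespace QWAP

variable {X : Type*} [MetricSpace X]

/-- visit set of the motion of `y` to `U` -/
def Vis (f : ℝ → X → X) (y : X) (U : Set X) : Set ℝ := {t | 0 ≤ t ∧ f t y ∈ U}

/-- time spent in `U` up to time `T` -/
def visVol (f : ℝ → X → X) (y : X) (U : Set X) (T : ℝ) : ℝ :=
  (volume (Vis f y U ∩ Set.Icc 0 T)).toReal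

/-- visits to `U` with frequency at least `δ` at arbitrarily large times -/
def GoodRate (f : ℝ → X → X) (y : X) (U : Set X) (δ : ℝ) : Prop :=
  ∀ T₀ : ℝ, ∃ T, T₀ ≤ T ∧ 0 < T ∧ δ * T ≤ visVol f y U T

lemma vol_inter_Icc_le (S : Set ℝ) (T : ℝ) :
    volume (S ∩ Set.Icc 0 T) ≤ ENNReal.ofReal T := by
  calc volume (S ∩ Set.Icc 0 T) ≤ volume (Set.Icc (0:ℝ) T) :=
        measure_mono inter_subset_right
    _ = ENNReal.ofReal T := by rw [Real.volume_Icc, sub_zero]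

lemma vol_inter_Icc_ne_top (S : Set ℝ) (T : ℝ) :
    volume (S ∩ Set.Icc 0 T) ≠ ⊤ :=
  ((vol_inter_Icc_le S T).trans_lt ENNReal.ofReal_lt_top).ne

lemma visVol_nonneg (f : ℝ → X → X) (y : X) (U : Set X) (T : ℝ) :
    0 ≤ visVol f y U T := ENNReal.toReal_nonneg

lemma visVol_le (f : ℝ → X → X) (y : X) (U : Set X) {T : ℝ} (hT : 0 ≤ T) :
    visVol f y U T ≤ T := by
  have := vol_inter_Icc_le (Vis f y U) T
  have h1 : (volume (Vis f y U ∩ Set.Icc 0 T)).toReal ≤ (ENNReal.ofReal T).toReal :=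
    ENNReal.toReal_mono ENNReal.ofReal_ne_top this
  rwa [ENNReal.toReal_ofReal hT] at h1

lemma continuous_slice {f : ℝ → X → X} (hf : IsSemiflow f) {s : ℝ} (hs : 0 ≤ s) :
    Continuous (fun y => f s y) := by
  have hg : Continuous (fun y : X => ((s, y) : ℝ × X)) := by continuity
  exact hf.1.comp_continuous hg (fun y => Set.mem_prod.mpr ⟨hs, Set.mem_univ y⟩)

lemma continuousOn_orbit {f : ℝ → X → X} (hf : IsSemiflow f) (y : X) :
    ContinuousOn (fun t => f t y) (Set.Ici 0) := by
  have hg : Continuous (fun t : ℝ => ((t, y) : ℝ × X)) := by continuity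
  exact hf.1.comp hg.continuousOn (fun t ht => Set.mem_prod.mpr ⟨ht, Set.mem_univ y⟩)

lemma measurableSet_vis {f : ℝ → X → X} (hf : IsSemiflow f) (y : X) {U : Set X}
    (hU : IsOpen U) : MeasurableSet (Vis f y U) := by
  have hc : ContinuousOn (fun t => f t y) (Set.Ici 0) := continuousOn_orbit hf y
  obtain ⟨V, hV, hVeq⟩ := (_root_.continuousOn_iff'.mp hc) U hU
  have : Vis f y U = V ∩ Set.Ici 0 := by
    rw [← hVeq]; ext t; simp [Vis, and_comm]
  rw [this]
  exact hV.measurableSet.inter measurableSet_Ici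

lemma hasDens_Ici : HasDens (Set.Ici (0:ℝ)) 1 := by
  have h : ∀ᶠ T : ℝ in atTop,
      (volume (Set.Ici (0:ℝ) ∩ Set.Icc 0 T)).toReal / T = 1 := by
    filter_upwards [eventually_ge_atTop (1:ℝ)] with T hT
    have h0 : (0:ℝ) ≤ T := by linarith
    rw [Set.inter_eq_self_of_subset_right (Set.Icc_subset_Ici_self), Real.volume_Icc,
      sub_zero, ENNReal.toReal_ofReal h0]
    exact div_self (by linarith)
  exact Tendsto.congr' (h.mono fun T hT => hT.symm) tendsto_const_nhds

/-- squeeze: if `A ⊆ A' ∪ B`, `A` has density one and `B` has vanishing density,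
then `A'` has density one -/
lemma hasDens_one_union {A A' B : Set ℝ} (hsub : A ⊆ A' ∪ B) (hA : HasDens A 1)
    (hB : Tendsto (fun T => (volume (B ∩ Set.Icc 0 T)).toReal / T) atTop (nhds 0)) :
    HasDens A' 1 := by
  have hlow : ∀ᶠ T : ℝ in atTop,
      (volume (A ∩ Set.Icc 0 T)).toReal / T - (volume (B ∩ Set.Icc 0 T)).toReal / T
        ≤ (volume (A' ∩ Set.Icc 0 T)).toReal / T := by
    filter_upwards [eventually_ge_atTop (1:ℝ)] with T hT
    have hTpos : (0:ℝ) < T := by linarith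
    have hv : volume (A ∩ Set.Icc 0 T) ≤
        volume (A' ∩ Set.Icc 0 T) + volume (B ∩ Set.Icc 0 T) := by
      refine le_trans (measure_mono ?_) (measure_union_le _ _)
      intro t ht
      rcases hsub ht.1 with h | h
      · exact Or.inl ⟨h, ht.2⟩
      · exact Or.inr ⟨h, ht.2⟩
    have hvr : (volume (A ∩ Set.Icc 0 T)).toReal ≤
        (volume (A' ∩ Set.Icc 0 T)).toReal + (volume (B ∩ Set.Icc 0 T)).toReal := by
      have := ENNReal.toReal_mono (by
        exact ENNReal.add_ne_top.mpr ⟨vol_inter_Icc_ne_top _ _, vol_inter_Icc_ne_top _ _⟩) hv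
      rwa [ENNReal.toReal_add (vol_inter_Icc_ne_top _ _) (vol_inter_Icc_ne_top _ _)] at this
    rw [div_sub_div_same, div_le_div_iff_of_pos_right hTpos]
    linarith
  have hup : ∀ᶠ T : ℝ in atTop, (volume (A' ∩ Set.Icc 0 T)).toReal / T ≤ 1 := by
    filter_upwards [eventually_ge_atTop (1:ℝ)] with T hT
    have hTpos : (0:ℝ) < T := by linarith
    rw [div_le_one hTpos]
    calc (volume (A' ∩ Set.Icc 0 T)).toReal ≤ (ENNReal.ofReal T).toReal :=
          ENNReal.toReal_mono ENNReal.ofReal_ne_top (vol_inter_Icc_le _ _)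
      _ = T := ENNReal.toReal_ofReal hTpos.le
  have hlim : Tendsto (fun T : ℝ =>
      (volume (A ∩ Set.Icc 0 T)).toReal / T - (volume (B ∩ Set.Icc 0 T)).toReal / T)
      atTop (nhds 1) := by
    have := hA.sub hB
    simpa using this
  exact tendsto_of_tendsto_of_tendsto_of_le_of_le' hlim tendsto_const_nhds hlow hup

lemma hasDens_one_mono {A A' : Set ℝ} (hsub : A ⊆ A') (hA : HasDens A 1) :
    HasDens A' 1 := by
  refine hasDens_one_union (B := ∅) (fun t ht => Or.inl (hsub ht)) hA ?_
  have : ∀ T : ℝ, (volume ((∅ : Set ℝ) ∩ Set.Icc 0 T)).toReal / T = 0 := by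
    intro T; simp
  simpa [this] using tendsto_const_nhds

/-- if `A` has density one and `B` is disjoint from `A`, with `A` measurable,
then `B` has vanishing density -/
lemma vanish {A B : Set ℝ} (hA : MeasurableSet A) (hd : ∀ t ∈ B, t ∉ A)
    (h : HasDens A 1) :
    Tendsto (fun T => (volume (B ∩ Set.Icc 0 T)).toReal / T) atTop (nhds 0) := by
  have hup : ∀ᶠ T : ℝ in atTop, (volume (B ∩ Set.Icc 0 T)).toReal / T ≤
      1 - (volume (A ∩ Set.Icc 0 T)).toReal / T := by
    filter_upwards [eventually_ge_atTop (1:ℝ)] with T hT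
    have hTpos : (0:ℝ) < T := by linarith
    have hsub : B ∩ Set.Icc 0 T ⊆ Set.Icc 0 T \ (A ∩ Set.Icc 0 T) := by
      intro t ht
      exact ⟨ht.2, fun hc => hd t ht.1 hc.1⟩
    have hveq : volume (Set.Icc (0:ℝ) T \ (A ∩ Set.Icc 0 T)) =
        volume (Set.Icc (0:ℝ) T) - volume (A ∩ Set.Icc 0 T) :=
      measure_diff inter_subset_right (hA.inter measurableSet_Icc).nullMeasurableSet
        (vol_inter_Icc_ne_top _ _)
    have hle : volume (A ∩ Set.Icc 0 T) ≤ volume (Set.Icc (0:ℝ) T) :=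
      measure_mono inter_subset_right
    have hr : (volume (Set.Icc (0:ℝ) T \ (A ∩ Set.Icc 0 T))).toReal =
        T - (volume (A ∩ Set.Icc 0 T)).toReal := by
      rw [hveq, ENNReal.toReal_sub_of_le hle (by
        rw [Real.volume_Icc, sub_zero]; exact ENNReal.ofReal_ne_top),
        Real.volume_Icc, sub_zero, ENNReal.toReal_ofReal hTpos.le]
    have h1 : (volume (B ∩ Set.Icc 0 T)).toReal ≤ T - (volume (A ∩ Set.Icc 0 T)).toReal := by
      rw [← hr]
      exact ENNReal.toReal_mono (by
        refine ((measure_mono (diff_subset)).trans_lt ?_).ne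
        rw [Real.volume_Icc, sub_zero]; exact ENNReal.ofReal_lt_top) (measure_mono hsub)
    rw [div_le_iff₀ hTpos]
    have : (1 - (volume (A ∩ Set.Icc 0 T)).toReal / T) * T
        = T - (volume (A ∩ Set.Icc 0 T)).toReal := by
      field_simp
    rw [this]
    exact h1
  have hlow : ∀ᶠ T : ℝ in atTop, (0:ℝ) ≤ (volume (B ∩ Set.Icc 0 T)).toReal / T := by
    filter_upwards [eventually_ge_atTop (1:ℝ)] with T hT
    have hTpos : (0:ℝ) < T := by linarith
    positivity
  have hlim : Tendsto (fun T : ℝ => 1 - (volume (A ∩ Set.Icc 0 T)).toReal / T)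
      atTop (nhds 0) := by
    have := (tendsto_const_nhds (x := (1:ℝ)) (f := atTop)).sub h
    simpa using this
  exact tendsto_of_tendsto_of_tendsto_of_le_of_le' tendsto_const_nhds hlim hlow hup

lemma not_goodRate_of_vanish {f : ℝ → X → X} {y : X} {U : Set X} {δ : ℝ} (hδ : 0 < δ)
    (hv : Tendsto (fun T => visVol f y U T / T) atTop (nhds 0)) :
    ¬ GoodRate f y U δ := by
  intro hg
  have hev : ∀ᶠ T : ℝ in atTop, visVol f y U T / T < δ :=
    hv.eventually_lt_const hδ
  obtain ⟨T₀, hT₀⟩ := eventually_atTop.mp hev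
  obtain ⟨T, hTT₀, hTpos, hgood⟩ := hg T₀
  have h1 : visVol f y U T / T < δ := hT₀ T hTT₀
  have h2 : δ ≤ visVol f y U T / T := (le_div_iff₀ hTpos).mpr hgood
  linarith

lemma vanish_of_not_good {f : ℝ → X → X} {y : X} {U : Set X}
    (h : ∀ δ : ℝ, 0 < δ → ¬ GoodRate f y U δ) :
    Tendsto (fun T => visVol f y U T / T) atTop (nhds 0) := by
  rw [Metric.tendsto_atTop]
  intro δ hδ
  obtain ⟨T₀, hT₀⟩ : ∃ T₀ : ℝ, ∀ T, T₀ ≤ T → ¬(0 < T ∧ δ * T ≤ visVol f y U T) := by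
    have := h δ hδ
    unfold GoodRate at this
    push_neg at this
    obtain ⟨T₀, hT₀⟩ := this
    exact ⟨T₀, fun T hT hc => absurd hc.2 (not_le.mpr (hT₀ T hT hc.1))⟩
  refine ⟨max T₀ 1, fun T hT => ?_⟩
  have hT1 : (1:ℝ) ≤ T := le_trans (le_max_right _ _) hT
  have hTpos : (0:ℝ) < T := by linarith
  have hlt : visVol f y U T < δ * T := by
    by_contra hc
    exact hT₀ T (le_trans (le_max_left _ _) hT) ⟨hTpos, by linarith⟩
  have hnn : 0 ≤ visVol f y U T / T := div_nonneg (visVol_nonneg f y U T) hTpos.le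
  have : visVol f y U T / T < δ := (div_lt_iff₀ hTpos).mpr (by linarith [mul_comm δ T])
  rw [Real.dist_eq, sub_zero, abs_of_nonneg hnn]
  exact this

/-- Minimality forces the orbit of `x` to visit every ball around every point of `C`
with positive upper density. -/
lemma posV {f : ℝ → X → X} {x : X} {C : Set X} (hf : IsSemiflow f) (hC : IsMCA f x C) :
    ∀ z ∈ C, ∀ ε : ℝ, 0 < ε → ∃ δ : ℝ, 0 < δ ∧ GoodRate f x (Metric.ball z ε) δ := by
  intro z hz ε hε
  by_contra hcon
  push_neg at hcon
  have hv : Tendsto (fun T => visVol f x (Metric.ball z ε) T / T) atTop (nhds 0) :=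
    vanish_of_not_good (fun δ hδ => hcon δ hδ)
  set C' : Set X := C ∩ (Metric.ball z (ε/2))ᶜ with hC'def
  have hC'closed : IsClosed C' := (hC.1.1).inter (isOpen_ball.isClosed_compl)
  have hctr : IsCtr f x C' := by
    refine ⟨hC'closed, fun γ hγ => ?_⟩
    set γ₀ := min γ (ε/4) with hγ₀def
    have hγ₀pos : 0 < γ₀ := lt_min hγ (by linarith)
    have hγ₀le : γ₀ ≤ ε/4 := min_le_right _ _
    have hsub : Vis f x (Metric.thickening γ₀ C) ⊆
        Vis f x (Metric.thickening γ₀ C') ∪ Vis f x (Metric.ball z ε) := by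
      rintro t ⟨ht, hmem⟩
      obtain ⟨c, hcC, hdist⟩ := Metric.mem_thickening_iff.mp hmem
      by_cases hcz : c ∈ Metric.ball z (ε/2)
      · refine Or.inr ⟨ht, Metric.mem_ball.mpr ?_⟩
        have h1 : dist (f t x) z ≤ dist (f t x) c + dist c z := dist_triangle _ _ _
        have h2 : dist c z < ε/2 := Metric.mem_ball.mp hcz
        linarith
      · exact Or.inl ⟨ht, Metric.mem_thickening_iff.mpr ⟨c, ⟨hcC, hcz⟩, hdist⟩⟩
    have hA : HasDens (Vis f x (Metric.thickening γ₀ C)) 1 := hC.1.2 γ₀ hγ₀pos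
    have h1 : HasDens (Vis f x (Metric.thickening γ₀ C')) 1 :=
      hasDens_one_union hsub hA hv
    have h2 : Vis f x (Metric.thickening γ₀ C') ⊆ Vis f x (Metric.thickening γ C') :=
      fun t ht => ⟨ht.1, Metric.thickening_mono (min_le_left _ _) C' ht.2⟩
    exact hasDens_one_mono h2 h1
  have heq : C' = C := hC.2 C' inter_subset_left hctr
  have : z ∈ C' := heq.symm ▸ hz
  exact this.2 (Metric.mem_ball_self (by linarith))

/-- shifting a positive-frequency visit set forward in time -/
lemma goodRate_shift {f : ℝ → X → X} {x : X} (hf : IsSemiflow f) {U V : Set X} {δ s : ℝ}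
    (hδ : 0 < δ) (hs : 0 ≤ s)
    (hUV : ∀ t, 0 ≤ t → f t x ∈ U → f (t + s) x ∈ V)
    (h : GoodRate f x U δ) : GoodRate f x V (δ / 2) := by
  intro T₀
  obtain ⟨T, hT1, hTpos, hgood⟩ := h (max (T₀ - s) (max s 1))
  have hTs : s ≤ T := le_trans (le_trans (le_max_left _ _) (le_max_right _ _)) hT1
  have hTT₀ : T₀ - s ≤ T := le_trans (le_max_left _ _) hT1
  refine ⟨T + s, by linarith, by linarith, ?_⟩
  have hsub : Vis f x U ∩ Set.Icc 0 T ⊆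
      (fun u => u + s) ⁻¹' (Vis f x V ∩ Set.Icc 0 (T + s)) := by
    rintro t ⟨⟨ht0, htU⟩, ht1, ht2⟩
    have hmem : t + s ∈ Vis f x V ∩ Set.Icc 0 (T + s) :=
      ⟨⟨by linarith, hUV t ht0 htU⟩, ⟨by linarith, by linarith⟩⟩
    exact hmem
  have hvol : volume (Vis f x U ∩ Set.Icc 0 T) ≤ volume (Vis f x V ∩ Set.Icc 0 (T + s)) := by
    calc volume (Vis f x U ∩ Set.Icc 0 T)
        ≤ volume ((fun u => u + s) ⁻¹' (Vis f x V ∩ Set.Icc 0 (T + s))) := measure_mono hsub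
      _ = volume (Vis f x V ∩ Set.Icc 0 (T + s)) := by
          exact measure_preimage_add_right volume s _
  have htr : visVol f x U T ≤ visVol f x V (T + s) :=
    ENNReal.toReal_mono (vol_inter_Icc_ne_top _ _) hvol
  have : δ / 2 * (T + s) ≤ δ * T := by nlinarith
  calc δ / 2 * (T + s) ≤ δ * T := this
    _ ≤ visVol f x U T := hgood
    _ ≤ visVol f x V (T + s) := htr

/-- the minimal center of attraction is forward invariant -/
lemma invariant {f : ℝ → X → X} {x : X} {C : Set X} (hf : IsSemiflow f) (hC : IsMCA f x C) :
    ∀ z ∈ C, ∀ s : ℝ, 0 ≤ s → f s z ∈ C := by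
  intro z hz s hs
  by_contra hw
  have hCne : C.Nonempty := ⟨z, hz⟩
  have hrpos : 0 < infDist (f s z) C :=
    ((hC.1.1).notMem_iff_infDist_pos hCne).mp hw
  set r := infDist (f s z) C / 2 with hrdef
  have hr2 : 0 < r := by positivity
  obtain ⟨ρ, hρpos, hball⟩ := Metric.continuous_iff.mp (continuous_slice hf hs) z r hr2
  obtain ⟨δ, hδ, hgr⟩ := posV hf hC z hz ρ hρpos
  have hUV : ∀ t, 0 ≤ t → f t x ∈ Metric.ball z ρ → f (t + s) x ∈ Metric.ball (f s z) r := by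
    intro t ht hmem
    have heq : f (t + s) x = f s (f t x) := by
      rw [hf.2.2 s t hs ht, add_comm]
    rw [heq]
    exact Metric.mem_ball.mpr (hball (f t x) (Metric.mem_ball.mp hmem))
  have hshift : GoodRate f x (Metric.ball (f s z) r) (δ / 2) :=
    goodRate_shift hf hδ hs hUV hgr
  have hd : ∀ t ∈ Vis f x (Metric.ball (f s z) r), t ∉ Vis f x (Metric.thickening r C) := by
    rintro t ⟨ht, hmem⟩ ⟨ht', hmem'⟩
    obtain ⟨c, hcC, hdist⟩ := Metric.mem_thickening_iff.mp hmem'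
    have h1 : infDist (f s z) C ≤ dist (f s z) c := Metric.infDist_le_dist_of_mem hcC
    have h2 : dist (f s z) c ≤ dist (f s z) (f t x) + dist (f t x) c := dist_triangle _ _ _
    have h3 : dist (f s z) (f t x) < r := by
      have := Metric.mem_ball.mp hmem; rwa [dist_comm]
    have : infDist (f s z) C < 2 * r := by linarith
    simp only [hrdef] at this
    linarith
  have hvan : Tendsto (fun T => visVol f x (Metric.ball (f s z) r) T / T) atTop (nhds 0) :=
    vanish (measurableSet_vis hf x Metric.isOpen_thickening) hd (hC.1.2 r hr2)
  exact not_goodRate_of_vanish (half_pos hδ) hvan hshift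

/-- each orbit point inherits positive visit frequency (strict version) -/
lemma goodRate_orbit {f : ℝ → X → X} {x : X} (hf : IsSemiflow f) {V : Set X} {δ s : ℝ}
    (hδ : 0 < δ) (hs : 0 ≤ s) (h : GoodRate f x V δ) :
    ∀ T₀ : ℝ, ∃ T, T₀ ≤ T ∧ 0 < T ∧ δ / 2 * T < visVol f (f s x) V T := by
  intro T₀
  obtain ⟨T', hT'1, hT'pos, hgood⟩ := h (max (T₀ + s) (s + (2*s/δ + 1)))
  have hT'a : T₀ + s ≤ T' := le_trans (le_max_left _ _) hT'1
  have hT'b : s + (2*s/δ + 1) ≤ T' := le_trans (le_max_right _ _) hT'1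
  set T := T' - s with hTdef
  have hsdiv : 0 ≤ 2*s/δ := by positivity
  have hTT₀ : T₀ ≤ T := by simp only [hTdef]; linarith
  have hT2 : 2*s/δ + 1 ≤ T := by simp only [hTdef]; linarith
  have hTpos : 0 < T := by linarith
  refine ⟨T, hTT₀, hTpos, ?_⟩
  have hfin1 : volume (Vis f x V ∩ Set.Icc s T') ≠ ⊤ := by
    refine ((measure_mono inter_subset_right).trans_lt ?_).ne
    rw [Real.volume_Icc]; exact ENNReal.ofReal_lt_top
  have hfin2 : volume (Set.Icc (0:ℝ) s) ≠ ⊤ := by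
    rw [Real.volume_Icc]; exact ENNReal.ofReal_ne_top
  have hsplit : volume (Vis f x V ∩ Set.Icc 0 T') ≤
      volume (Vis f x V ∩ Set.Icc s T') + volume (Set.Icc (0:ℝ) s) := by
    refine le_trans (measure_mono ?_) (measure_union_le _ _)
    rintro t ⟨htV, ht0, ht1⟩
    by_cases hts : s ≤ t
    · exact Or.inl ⟨htV, hts, ht1⟩
    · exact Or.inr ⟨ht0, le_of_not_ge hts⟩
  have hsr : visVol f x V T' ≤ (volume (Vis f x V ∩ Set.Icc s T')).toReal + s := by
    have h2 := ENNReal.toReal_mono (ENNReal.add_ne_top.mpr ⟨hfin1, hfin2⟩) hsplit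
    rwa [ENNReal.toReal_add hfin1 hfin2, Real.volume_Icc, sub_zero,
      ENNReal.toReal_ofReal hs] at h2
  have hset : Vis f (f s x) V ∩ Set.Icc 0 T
      = (fun u => u + s) ⁻¹' (Vis f x V ∩ Set.Icc s T') := by
    ext t
    simp only [Set.mem_inter_iff, Set.mem_preimage, Set.mem_Icc, Vis, Set.mem_setOf_eq]
    constructor
    · rintro ⟨⟨ht0, htV⟩, ht1, ht2⟩
      rw [hf.2.2 t s ht0 hs] at htV
      exact ⟨⟨by linarith, htV⟩, by linarith, by simp only [hTdef] at ht2; linarith⟩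
    · rintro ⟨⟨hts0, htV⟩, h1, h2⟩
      have ht0 : 0 ≤ t := by linarith
      rw [← hf.2.2 t s ht0 hs] at htV
      exact ⟨⟨ht0, htV⟩, ht0, by simp only [hTdef]; linarith⟩
  have hveq : visVol f (f s x) V T = (volume (Vis f x V ∩ Set.Icc s T')).toReal := by
    unfold visVol
    rw [hset, measure_preimage_add_right]
  have hds : 0 ≤ δ * s := mul_nonneg hδ.le hs
  have hT' : T' = T + s := by simp only [hTdef]; ring
  have hkey : s + δ/2 ≤ δ/2 * T := by
    have he : δ/2 * (2*s/δ + 1) = s + δ/2 := by field_simp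
    have := mul_le_mul_of_nonneg_left hT2 (half_pos hδ).le
    linarith
  have hbig : δ * T' = δ * T + δ * s := by rw [hT']; ring
  linarith [hgood, hsr, hveq.ge, hveq.le]

/-- openness of the set of points with a good visit window -/
lemma isOpen_E {f : ℝ → X → X} (hf : IsSemiflow f) (z : X) (ε δ T₀ : ℝ) (hδ : 0 < δ) :
    IsOpen {y : X | ∃ T, T₀ ≤ T ∧ 0 < T ∧ δ * T < visVol f y (Metric.ball z ε) T} := by
  rw [Metric.isOpen_iff]
  rintro y₀ ⟨T, hTT₀, hTpos, hlt⟩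
  set A := Vis f y₀ (Metric.ball z ε) ∩ Set.Icc 0 T with hAdef
  have hAm : MeasurableSet A :=
    (measurableSet_vis hf y₀ Metric.isOpen_ball).inter measurableSet_Icc
  have hAfin : volume A ≠ ⊤ := vol_inter_Icc_ne_top _ _
  have hδT : 0 ≤ δ * T := by positivity
  have h1 : ENNReal.ofReal (δ * T) < volume A := by
    rw [← ENNReal.ofReal_toReal hAfin]
    exact (ENNReal.ofReal_lt_ofReal_iff_of_nonneg hδT).mpr hlt
  obtain ⟨K, hKA, hKc, hKlt⟩ := hAm.exists_isCompact_lt_add hAfin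
      (ε := volume A - ENNReal.ofReal (δ * T)) (tsub_pos_of_lt h1).ne'
  have hKvol : ENNReal.ofReal (δ * T) < volume K := by
    by_contra hc
    push_neg at hc
    have h2 : volume K + (volume A - ENNReal.ofReal (δ * T)) ≤ volume A := by
      calc volume K + (volume A - ENNReal.ofReal (δ * T))
          ≤ ENNReal.ofReal (δ * T) + (volume A - ENNReal.ofReal (δ * T)) :=
            add_le_add hc le_rfl
        _ = volume A := add_tsub_cancel_of_le h1.le
    exact absurd hKlt (not_lt.mpr h2)
  have hprop : ∀ t : ℝ, t ∈ K → ∃ ρ, 0 < ρ ∧ ∀ t' y', dist t' t < ρ → dist y' y₀ < ρ →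
      0 ≤ t' → f t' y' ∈ Metric.ball z ε := by
    intro t htK
    have htA := hKA htK
    have ht0 : 0 ≤ t := htA.2.1
    have htb : f t y₀ ∈ Metric.ball z ε := htA.1.2
    have hcw : ContinuousWithinAt (fun p : ℝ × X => f p.1 p.2)
        (Set.Ici 0 ×ˢ Set.univ) (t, y₀) :=
      hf.1 (t, y₀) (Set.mem_prod.mpr ⟨ht0, Set.mem_univ _⟩)
    have hnhds : (fun p : ℝ × X => f p.1 p.2) ⁻¹' Metric.ball z ε ∈
        nhdsWithin (t, y₀) (Set.Ici 0 ×ˢ Set.univ) :=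
      hcw (Metric.isOpen_ball.mem_nhds htb)
    obtain ⟨W, hWopen, hWmem, hWsub⟩ := mem_nhdsWithin.mp hnhds
    obtain ⟨ρ, hρpos, hρsub⟩ := Metric.isOpen_iff.mp hWopen _ hWmem
    refine ⟨ρ, hρpos, fun t' y' h1' h2' h3' => ?_⟩
    have hmemball : ((t', y') : ℝ × X) ∈ Metric.ball ((t, y₀) : ℝ × X) ρ := by
      rw [← ball_prod_same]
      exact ⟨Metric.mem_ball.mpr h1', Metric.mem_ball.mpr h2'⟩
    exact hWsub ⟨hρsub hmemball, Set.mem_prod.mpr ⟨h3', Set.mem_univ _⟩⟩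
  have hprop' : ∀ t : K, ∃ ρ, 0 < ρ ∧ ∀ t' y', dist t' t.1 < ρ → dist y' y₀ < ρ →
      0 ≤ t' → f t' y' ∈ Metric.ball z ε := fun t => hprop t.1 t.2
  choose ρfun hρpos hρprop using hprop'
  have hcover : K ⊆ ⋃ t : K, Metric.ball t.1 (ρfun t) := fun t ht =>
    Set.mem_iUnion.mpr ⟨⟨t, ht⟩, Metric.mem_ball_self (hρpos _)⟩
  obtain ⟨Fs, hFs⟩ := hKc.elim_finite_subcover (fun t : K => Metric.ball t.1 (ρfun t))
    (fun _ => Metric.isOpen_ball) hcover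
  have hKne : K.Nonempty := by
    rcases K.eq_empty_or_nonempty with h | h
    · rw [h, measure_empty] at hKvol
      exact absurd hKvol (by simp)
    · exact h
  have hFne : Fs.Nonempty := by
    obtain ⟨t, ht⟩ := hKne
    have h2 := hFs ht
    rw [Set.mem_iUnion₂] at h2
    obtain ⟨i, hi, _⟩ := h2
    exact ⟨i, hi⟩
  set η := Fs.inf' hFne ρfun with hηdef
  have hηpos : 0 < η := (Finset.lt_inf'_iff hFne).mpr fun i _ => hρpos i
  refine ⟨η, hηpos, fun y' hy' => ?_⟩
  refine ⟨T, hTT₀, hTpos, ?_⟩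
  have hKsub : K ⊆ Vis f y' (Metric.ball z ε) ∩ Set.Icc 0 T := by
    intro t ht
    have h2 := hFs ht
    rw [Set.mem_iUnion₂] at h2
    obtain ⟨i, hiF, hti⟩ := h2
    have hdt : dist t i.1 < ρfun i := Metric.mem_ball.mp hti
    have hdy : dist y' y₀ < ρfun i :=
      lt_of_lt_of_le (Metric.mem_ball.mp hy') (Finset.inf'_le _ hiF)
    have ht0 : 0 ≤ t := (hKA ht).2.1
    exact ⟨⟨ht0, hρprop i t y' hdt hdy ht0⟩, (hKA ht).2⟩
  calc δ * T = (ENNReal.ofReal (δ * T)).toReal := (ENNReal.toReal_ofReal hδT).symm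
    _ < visVol f y' (Metric.ball z ε) T := by
        refine (ENNReal.toReal_lt_toReal ENNReal.ofReal_ne_top
          (vol_inter_Icc_ne_top _ _)).mpr ?_
        exact lt_of_lt_of_le hKvol (measure_mono hKsub)

end QWAP


open QWAP in
theorem quasi_weakly_ap_residual {X : Type*} [MetricSpace X]
    [TopologicalSpace.SeparableSpace X] [CompleteSpace X]
    (f : ℝ → X → X) (hf : IsSemiflow f) (x : X)
    (horb : IsCompact (closure {y : X | ∃ t : ℝ, 0 ≤ t ∧ f t x = y}))
    (C : Set X) (hC : IsMCA f x C) (hxC : x ∈ C) :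
    {y : C | IsMCA f (y : X) C ∧ (y : X) ∈ C} ∈ residual C := by
  classical
  have hCclosed : IsClosed C := hC.1.1
  haveI : Nonempty ↥C := ⟨⟨x, hxC⟩⟩
  obtain ⟨u, hu⟩ := TopologicalSpace.exists_dense_seq ↥C
  have hδex : ∀ n k : ℕ, ∃ δ : ℝ, 0 < δ ∧
      GoodRate f x (Metric.ball ((u n : X)) (1/(k+1))) δ :=
    fun n k => posV hf hC (u n) (u n).2 (1/(k+1)) (by positivity)
  choose δf hδf hδgr using hδex
  set E : ℕ → ℕ → ℕ → Set X := fun n k m =>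
    {y : X | ∃ T, (m : ℝ) ≤ T ∧ 0 < T ∧
      δf n k / 2 * T < visVol f y (Metric.ball ((u n : X)) (1/(k+1))) T} with hEdef
  set R : ℕ → ℕ → ℕ → Set ↥C := fun n k m => Subtype.val ⁻¹' E n k m with hRdef
  have hRopen : ∀ n k m, IsOpen (R n k m) := fun n k m =>
    (isOpen_E hf _ _ _ _ (half_pos (hδf n k))).preimage continuous_subtype_val
  have hRdense : ∀ n k m, Dense (R n k m) := by
    intro n k m
    rw [Metric.dense_iff]
    intro y₀ r hr
    obtain ⟨δ', hδ'pos, hgr'⟩ := posV hf hC (y₀ : X) y₀.2 r hr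
    obtain ⟨T, hT1, hTpos, hTgood⟩ := hgr' 1
    have hvpos : 0 < visVol f x (Metric.ball (y₀ : X) r) T :=
      lt_of_lt_of_le (by positivity) hTgood
    have hne : (Vis f x (Metric.ball (y₀ : X) r) ∩ Set.Icc 0 T).Nonempty := by
      by_contra hc
      rw [Set.not_nonempty_iff_eq_empty] at hc
      have : visVol f x (Metric.ball (y₀ : X) r) T = 0 := by
        unfold visVol; rw [hc, measure_empty]; simp
      linarith
    obtain ⟨s, ⟨hs0, hsball⟩, _⟩ := hne
    have hwC : f s x ∈ C := invariant hf hC x hxC s hs0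
    refine ⟨⟨f s x, hwC⟩, Metric.mem_ball.mpr ?_, ?_⟩
    · rw [Subtype.dist_eq]
      exact Metric.mem_ball.mp hsball
    · exact goodRate_orbit hf (hδf n k) hs0 (hδgr n k) (m : ℝ)
  have hImem : (⋂ n : ℕ, ⋂ k : ℕ, ⋂ m : ℕ, R n k m) ∈ residual ↥C := by
    refine (countable_iInter_mem.mpr fun n => ?_)
    refine (countable_iInter_mem.mpr fun k => ?_)
    refine (countable_iInter_mem.mpr fun m => ?_)
    exact residual_of_dense_open (hRopen n k m) (hRdense n k m)
  refine Filter.mem_of_superset hImem ?_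
  intro y hy
  simp only [Set.mem_iInter] at hy
  have hyfreq : ∀ n k : ℕ, ∀ T₀ : ℝ, ∃ T, T₀ ≤ T ∧ 0 < T ∧
      δf n k / 2 * T ≤ visVol f (y : X) (Metric.ball ((u n : X)) (1/(k+1))) T := by
    intro n k T₀
    obtain ⟨m, hm⟩ := exists_nat_ge T₀
    obtain ⟨T, hT1, hT2, hT3⟩ := hy n k m
    exact ⟨T, le_trans hm hT1, hT2, hT3.le⟩
  refine ⟨⟨⟨hCclosed, fun ε hε => ?_⟩, ?_⟩, y.2⟩
  · -- C is a center of attraction of y, since the orbit of y stays in C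
    refine hasDens_one_mono (A := Set.Ici 0) ?_ hasDens_Ici
    intro t ht
    exact ⟨ht, Metric.self_subset_thickening hε C (invariant hf hC (y : X) y.2 t ht)⟩
  · -- minimality for y
    intro C' hC'sub hC'ctr
    by_contra hneq
    obtain ⟨z', hz'C, hz'notin⟩ : ∃ z', z' ∈ C ∧ z' ∉ C' := by
      rcases Set.exists_of_ssubset (hC'sub.ssubset_of_ne hneq) with ⟨z', h1, h2⟩
      exact ⟨z', h1, h2⟩
    have hC'ne : C'.Nonempty := by
      rcases C'.eq_empty_or_nonempty with hc | hc
      · exfalso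
        have h1 := hC'ctr.2 1 one_pos
        rw [hc] at h1
        have hsetempty : {t : ℝ | 0 ≤ t ∧ f t (y : X) ∈ Metric.thickening 1 (∅ : Set X)}
            = (∅ : Set ℝ) := by
          simp [Metric.thickening_empty]
        rw [hsetempty] at h1
        have h2 : Tendsto (fun T : ℝ =>
            (volume ((∅ : Set ℝ) ∩ Set.Icc 0 T)).toReal / T) atTop (nhds 0) := by
          have : ∀ T : ℝ, (volume ((∅ : Set ℝ) ∩ Set.Icc 0 T)).toReal / T = 0 := by
            intro T; simp
          simpa [this] using tendsto_const_nhds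
        exact one_ne_zero (tendsto_nhds_unique h1 h2)
      · exact hc
    have hrpos : 0 < infDist z' C' :=
      ((hC'ctr.1).notMem_iff_infDist_pos hC'ne).mp hz'notin
    set r := infDist z' C' with hrdef
    obtain ⟨n, hn⟩ := Metric.denseRange_iff.mp hu ⟨z', hz'C⟩ (r/4) (by positivity)
    rw [Subtype.dist_eq] at hn
    obtain ⟨k, hk⟩ := exists_nat_one_div_lt (show (0:ℝ) < r/4 by positivity)
    have hd : ∀ t ∈ Vis f (y : X) (Metric.ball ((u n : X)) (1/(k+1))),
        t ∉ Vis f (y : X) (Metric.thickening (r/2) C') := by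
      rintro t ⟨ht0, htball⟩ ⟨ht0', htthick⟩
      obtain ⟨c, hcC', hdistc⟩ := Metric.mem_thickening_iff.mp htthick
      have h1 : infDist z' C' ≤ dist z' c := Metric.infDist_le_dist_of_mem hcC'
      have h2 : dist z' c ≤ dist z' (u n : X) + dist ((u n : X)) (f t (y : X))
          + dist (f t (y : X)) c := dist_triangle4 _ _ _ _
      have h3 : dist ((u n : X)) (f t (y : X)) < 1/(k+1) := by
        have := Metric.mem_ball.mp htball; rwa [dist_comm]
      have hk' : (1:ℝ)/(k+1) < r/4 := hk
      linarith
    have hvan := vanish (measurableSet_vis hf (y : X) Metric.isOpen_thickening) hd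
      (hC'ctr.2 (r/2) (by positivity))
    have hgr : GoodRate f (y : X) (Metric.ball ((u n : X)) (1/(k+1))) (δf n k / 2) :=
      fun T₀ => hyfreq n k T₀
    exact not_goodRate_of_vanish (half_pos (hδf n k)) hvan hgr
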